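/- Matrix interpretation of the Dirac-modified pairing: let U be a vector of linear functionals, h(x) = Π_{j=1}^{M} (x − c_j)^{M_j + 1} with deg h = N, Λ an N×N matrix, and Ũ = U + Λδ. Then for any N×N matrix polynomials Q and W, setting B̃(x) = W(h(x))·P_0(x): ( (Q(h(x)))^T Ũ )(B̃) = ( (Q(h(x)))^T U )(B̃) + W(0) · δ(P_0) · Λ^T · Q(0). -/

import Mathlib

open Polynomial Matrix Finset

noncomputable section

/-- `N × N` matrices with polynomial entries, viewed as matrix polynomials. -/
abbrev MatPoly (N : ℕ) := Matrix (Fin N) (Fin N) (Polynomial ℂ)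

/-- Evaluation of a matrix polynomial at a complex number (entrywise evaluation). -/
def evalM {N : ℕ} (Q : MatPoly N) (z : ℂ) : Matrix (Fin N) (Fin N) ℂ :=
  Q.map (Polynomial.eval z)

/-- Composition of a matrix polynomial with a scalar polynomial `h` (entrywise). -/
def compH {N : ℕ} (Q : MatPoly N) (h : Polynomial ℂ) : MatPoly N :=
  Q.map fun p => p.comp h

/-- The vector polynomial `P₀(x) = [1, x, …, x^{N-1}]ᵀ`. -/
def P0 (N : ℕ) : Fin N → Polynomial ℂ := fun i => Polynomial.X ^ (i : ℕ)

/-- Action of a vector of linear functionals `U` on a vector polynomial `P`: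
the matrix with `(i,j)` entry `u^j(p_i)`. -/
def applyU {N : ℕ} (U : Fin N → (Polynomial ℂ →ₗ[ℂ] ℂ)) (P : Fin N → Polynomial ℂ) :
    Matrix (Fin N) (Fin N) ℂ := Matrix.of fun i j => U j (P i)

/-- The vector polynomial `B(x) = V(h(x)) P₀(x)` associated to a matrix polynomial `V`. -/
def Bvec {N : ℕ} (V : MatPoly N) (h : Polynomial ℂ) : Fin N → Polynomial ℂ :=
  (compH V h).mulVec (P0 N)

/-- `((Qᵀ U)(P))_{i,j} = Σ_s u^s (Q_{s,j} p_i)`. -/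
def transApply {N : ℕ} (U : Fin N → (Polynomial ℂ →ₗ[ℂ] ℂ)) (Q : MatPoly N)
    (P : Fin N → Polynomial ℂ) : Matrix (Fin N) (Fin N) ℂ :=
  Matrix.of fun i j => ∑ s, U s (Q s j * P i)

/-- The linear functional `p ↦ p⁽ⁱ⁾(c)` (the `i`-th derivative evaluated at `c`). -/
def dd (c : ℂ) (i : ℕ) : Polynomial ℂ →ₗ[ℂ] ℂ :=
  (Polynomial.leval c).comp
    ((Polynomial.derivative : Polynomial ℂ →ₗ[ℂ] Polynomial ℂ) ^ i)

/-- The components of the Dirac delta vector functional associated with the points `c j`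
and multiplicities `Mu j + 1`, via an identification `e` of `Fin N` with the pairs
`(j, i)`, `0 ≤ i ≤ Mu j`. -/
def deltaVec {N M : ℕ} (c : Fin M → ℂ) (Mu : Fin M → ℕ)
    (e : Fin N ≃ (Σ j : Fin M, Fin (Mu j + 1))) : Fin N → (Polynomial ℂ →ₗ[ℂ] ℂ) :=
  fun s => dd (c (e s).1) ((e s).2 : ℕ)

/-- `δ(P)`: the matrix with `(r,s)` entry the `s`-th component of `δ` applied to `p_r`. -/
def deltaMat {N M : ℕ} (c : Fin M → ℂ) (Mu : Fin M → ℕ)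
    (e : Fin N ≃ (Σ j : Fin M, Fin (Mu j + 1))) (P : Fin N → Polynomial ℂ) :
    Matrix (Fin N) (Fin N) ℂ :=
  Matrix.of fun r s => deltaVec c Mu e s (P r)

/-- The modified functional `Ũ = U + Λδ` acting on a vector polynomial:
`Ũ(P) = U(P) + δ(P) Λᵀ`. -/
def applyUt {N M : ℕ} (U : Fin N → (Polynomial ℂ →ₗ[ℂ] ℂ))
    (Λ : Matrix (Fin N) (Fin N) ℂ) (c : Fin M → ℂ) (Mu : Fin M → ℕ)
    (e : Fin N ≃ (Σ j : Fin M, Fin (Mu j + 1))) (P : Fin N → Polynomial ℂ) :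
    Matrix (Fin N) (Fin N) ℂ :=
  applyU U P + deltaMat c Mu e P * Λ.transpose

/-- The coefficient of degree `m` of a matrix polynomial (its "leading coefficient"
when it has degree `m`). -/
def leadC {N : ℕ} (Q : MatPoly N) (m : ℕ) : Matrix (Fin N) (Fin N) ℂ :=
  Matrix.of fun i j => (Q i j).coeff m

/-- `K_{m+1}(c_l, c_l) = Σ_{j=0}^m G_j(0) V_j(0)` (independent of the zero `c_l` of `h`,
since `h(c_l) = 0`). -/
def Kzero {N : ℕ} (V G : ℕ → MatPoly N) (m : ℕ) : Matrix (Fin N) (Fin N) ℂ :=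
  ∑ j ∈ Finset.range (m + 1), evalM (G j) 0 * evalM (V j) 0

/-- The components `ũ^j = u^j + Σ_t Λ_{j,t} δ^t` of the modified vector functional
`Ũ = U + Λδ`. -/
def Utf {N M : ℕ} (U : Fin N → (Polynomial ℂ →ₗ[ℂ] ℂ))
    (Λ : Matrix (Fin N) (Fin N) ℂ) (c : Fin M → ℂ) (Mu : Fin M → ℕ)
    (e : Fin N ≃ (Σ j : Fin M, Fin (Mu j + 1))) : Fin N → (Polynomial ℂ →ₗ[ℂ] ℂ) :=
  fun j => U j + ∑ t, Λ j t • deltaVec c Mu e t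

/-- **Matrix interpretation of the Dirac-modified pairing**: for any matrix polynomials
`Q`, `W` and `B̃(x) = W(h(x)) P₀(x)`,
`((Q(h(x)))ᵀ Ũ)(B̃) = ((Q(h(x)))ᵀ U)(B̃) + W(0) δ(P₀) Λᵀ Q(0)`. -/

lemma dd_of_pow_dvd {a : ℂ} {n i : ℕ} (hi : i ≤ n) {p : Polynomial ℂ}
    (hp : (Polynomial.X - Polynomial.C a) ^ (n + 1) ∣ p) : dd a i p = 0 := by
  have h1 : (Polynomial.X - Polynomial.C a) ^ (n + 1 - i) ∣ derivative^[i] p :=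
    pow_sub_dvd_iterate_derivative_of_pow_dvd i hp
  have h2 : (Polynomial.X - Polynomial.C a) ∣ derivative^[i] p :=
    (dvd_pow_self _ (Nat.sub_ne_zero_of_lt (by omega))).trans h1
  have := (dvd_iff_isRoot.mp h2)
  simpa [dd, Module.End.pow_apply, Polynomial.IsRoot] using this

lemma deltaVec_h_mul {N M : ℕ} (c : Fin M → ℂ) (Mu : Fin M → ℕ)
    (e : Fin N ≃ (Σ j : Fin M, Fin (Mu j + 1))) {h : Polynomial ℂ}
    (hh : h = ∏ j, (Polynomial.X - Polynomial.C (c j)) ^ (Mu j + 1))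
    (t : Fin N) (q : Polynomial ℂ) : deltaVec c Mu e t (h * q) = 0 := by
  refine dd_of_pow_dvd (n := Mu (e t).1) (e t).2.is_le ?_
  rw [hh]
  exact Dvd.dvd.mul_right (Finset.dvd_prod_of_mem (fun j => (Polynomial.X - Polynomial.C (c j)) ^ (Mu j + 1)) (Finset.mem_univ (e t).1)) q

lemma deltaVec_comp_mul {N M : ℕ} (c : Fin M → ℂ) (Mu : Fin M → ℕ)
    (e : Fin N ≃ (Σ j : Fin M, Fin (Mu j + 1))) {h : Polynomial ℂ}
    (hh : h = ∏ j, (Polynomial.X - Polynomial.C (c j)) ^ (Mu j + 1))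
    (t : Fin N) (f g : Polynomial ℂ) :
    deltaVec c Mu e t (f.comp h * g) = f.eval 0 * deltaVec c Mu e t g := by
  conv_lhs => rw [← Polynomial.X_mul_divX_add f]
  rw [Polynomial.add_comp, Polynomial.mul_comp, Polynomial.X_comp, Polynomial.C_comp,
    add_mul, mul_assoc, map_add, deltaVec_h_mul c Mu e hh, zero_add,
    ← Polynomial.smul_eq_C_mul, _root_.map_smul, smul_eq_mul, Polynomial.coeff_zero_eq_eval_zero]

lemma deltaVec_Bvec {N M : ℕ} (c : Fin M → ℂ) (Mu : Fin M → ℕ)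
    (e : Fin N ≃ (Σ j : Fin M, Fin (Mu j + 1))) {h : Polynomial ℂ}
    (hh : h = ∏ j, (Polynomial.X - Polynomial.C (c j)) ^ (Mu j + 1))
    (t : Fin N) (f : Polynomial ℂ) (W : MatPoly N) (i : Fin N) :
    deltaVec c Mu e t (f.comp h * Bvec W h i) =
      f.eval 0 * ∑ k, (W i k).eval 0 * deltaVec c Mu e t (P0 N k) := by
  rw [deltaVec_comp_mul c Mu e hh]
  congr 1
  rw [Bvec, Matrix.mulVec, dotProduct, map_sum]
  exact Finset.sum_congr rfl fun k _ => deltaVec_comp_mul c Mu e hh t _ _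

theorem dirac_modified_pairing
    (N M : ℕ) (hN : 1 ≤ N)
    (c : Fin M → ℂ) (hc : Function.Injective c) (Mu : Fin M → ℕ)
    (h : Polynomial ℂ)
    (hh : h = ∏ j, (Polynomial.X - Polynomial.C (c j)) ^ (Mu j + 1))
    (hdeg : h.natDegree = N)
    (e : Fin N ≃ (Σ j : Fin M, Fin (Mu j + 1)))
    (U : Fin N → (Polynomial ℂ →ₗ[ℂ] ℂ))
    (Λ : Matrix (Fin N) (Fin N) ℂ)
    (Q W : MatPoly N) :
    transApply (Utf U Λ c Mu e) (compH Q h) (Bvec W h) =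
      transApply U (compH Q h) (Bvec W h)
        + evalM W 0 * deltaMat c Mu e (P0 N) * Λ.transpose * evalM Q 0 := by
  ext i j
  simp only [transApply, Matrix.of_apply, Utf, LinearMap.add_apply, LinearMap.sum_apply,
    LinearMap.smul_apply, smul_eq_mul, Matrix.add_apply]
  rw [Finset.sum_add_distrib]
  congr 1
  have key : ∀ s t : Fin N, deltaVec c Mu e t (compH Q h s j * Bvec W h i) =
      (Q s j).eval 0 * ∑ k, (W i k).eval 0 * deltaVec c Mu e t (P0 N k) := fun s t => by
    simpa [compH] using deltaVec_Bvec c Mu e hh t (Q s j) W i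
  simp only [key, Matrix.mul_apply, evalM, deltaMat, Matrix.map_apply, Matrix.of_apply,
    Matrix.transpose_apply, Finset.sum_mul, Finset.mul_sum]
  refine Finset.sum_congr rfl fun s _ => ?_
  refine Finset.sum_congr rfl fun t _ => ?_
  refine Finset.sum_congr rfl fun k _ => ?_
  ring


end
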